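/- Let (V, E, o, t, inv) be a finite connected multigraph with Betti number β = #E/2 − #V + 1. Then for every integer n with 0 ≤ n ≤ β there exists a 1-form α : E → ℝ with values in (−π, π] such that every minimal form φ in F(α) satisfies (1/2)·#supp φ = n; equivalently, the minimum of (1/2)·#supp b over all 1-forms b with the same flux function as α equals n. (Paper: Proposition 2.2(ii): for any integer n ∈ [0, β] there exists a magnetic potential α with invariant I_α = n, stated on the fundamental graph.) -/

import Mathlib

open scoped Classical
open Finset

noncomputable section

/-- The degree of a vertex: the number of oriented edges starting at it. -/
def mdeg {V E : Type} [Fintype E] (o : E → V) (v : V) : ℕ :=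
  (Finset.univ.filter fun e => o e = v).card

/-- The combinatorial magnetic Laplacian `Δ_α`. -/
def magLap {V E : Type} [Fintype E] (o t : E → V) (α : E → ℝ)
    (f : V → ℂ) (v : V) : ℂ :=
  ∑ e ∈ Finset.univ.filter (fun e => o e = v),
    (f v - Complex.exp (Complex.I * (α e : ℂ)) * f (t e))

/-- The fiber magnetic Laplacian `Δ_{m,φ}(θ)`. -/
def fiberLap {V E : Type} [Fintype E] {d : ℕ} (o t : E → V)
    (m : E → Fin d → ℝ) (φ : E → ℝ) (θ : Fin d → ℝ) (f : V → ℂ) (v : V) : ℂ :=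
  (mdeg o v : ℂ) * f v -
    ∑ e ∈ Finset.univ.filter (fun e => o e = v),
      Complex.exp (Complex.I * ((φ e + ∑ i, m e i * θ i : ℝ) : ℂ)) * f (t e)

/-- Standard inner product on `ℂ^V` (conjugate-linear in the first argument). -/
def dotC {V : Type} [Fintype V] (f g : V → ℂ) : ℂ :=
  ∑ v, (starRingEnd ℂ) (f v) * g v

/-- `lam` lists the eigenvalues of the operator `T` on `ℂ^V` in nondecreasing
order, counted with multiplicity (witnessed by an orthonormal eigenbasis). -/
def IsEigList {V : Type} [Fintype V] (T : (V → ℂ) → (V → ℂ))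
    (lam : Fin (Fintype.card V) → ℝ) : Prop :=
  Monotone lam ∧ ∃ u : Fin (Fintype.card V) → (V → ℂ),
    (∀ i j, dotC (u i) (u j) = if i = j then (1 : ℂ) else 0) ∧
    ∀ i, T (u i) = fun v => ((lam i : ℝ) : ℂ) * u i v

/-- A closed walk in the multigraph. -/
def IsClosedWalk {V E : Type} (o t : E → V) {k : ℕ} (c : Fin (k + 1) → E) : Prop :=
  (∀ i : Fin k, t (c i.castSucc) = o (c i.succ)) ∧ t (c (Fin.last k)) = o (c 0)

/-- Two forms have the same flux along every closed walk. -/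
def SameFlux {V E W : Type} [AddCommMonoid W] (o t : E → V) (b b' : E → W) : Prop :=
  ∀ (k : ℕ) (c : Fin (k + 1) → E), IsClosedWalk o t c →
    ∑ i, b (c i) = ∑ i, b' (c i)

/-- Connectivity of the multigraph: any two distinct vertices are the endpoints
of some walk. -/
def MGConnected {V E : Type} (o t : E → V) : Prop :=
  ∀ u v : V, u ≠ v → ∃ (k : ℕ) (c : Fin (k + 1) → E),
    (∀ i : Fin k, t (c i.castSucc) = o (c i.succ)) ∧ o (c 0) = u ∧ t (c (Fin.last k)) = v

/-- The set of fluxes of a form along all closed walks. -/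
def fluxSet {V E W : Type} [AddCommMonoid W] (o t : E → V) (b : E → W) : Set W :=
  {w | ∃ (k : ℕ) (c : Fin (k + 1) → E), IsClosedWalk o t c ∧ ∑ i, b (c i) = w}

/-- The number of oriented edges in the support of a form. -/
def suppCard {E : Type} [Fintype E] {W : Type} [Zero W] (b : E → W) : ℕ :=
  (Finset.univ.filter fun e => b e ≠ 0).card

/-- The integer lattice `ℤ^d` inside `ℝ^d`. -/
def intLattice (d : ℕ) : Set (Fin d → ℝ) :=
  {w | ∀ i, ∃ z : ℤ, w i = (z : ℝ)}



theorem exists_indep_reals (n : ℕ) :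
    ∃ x : Fin n → ℝ, LinearIndependent ℚ x ∧ ∀ i, x i ∈ Set.Ioo 0 Real.pi := by
  -- basis of ℝ over ℚ
  set ι := Module.Basis.ofVectorSpaceIndex ℚ ℝ
  set B := Module.Basis.ofVectorSpace ℚ ℝ
  have hinf : Infinite ι := by
    by_contra h
    have hfin : Finite ι := not_infinite_iff_finite.mp h
    have : Countable (ι →₀ ℚ) := by infer_instance
    have : Countable ℝ := Countable.of_equiv _ (B.repr.toEquiv).symm
    exact Cardinal.not_countable_real Set.countable_univ
  haveI := hinf
  let f : Fin n → ι := fun i => (Infinite.natEmbedding ι) i.1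
  have hfinj : Function.Injective f := by
    intro i j hij
    exact Fin.ext ((Infinite.natEmbedding ι).injective hij)
  let y : Fin n → ℝ := fun i => B (f i)
  have hy : LinearIndependent ℚ y := B.linearIndependent.comp f hfinj
  have hyne : ∀ i, y i ≠ 0 := fun i => hy.ne_zero i
  -- choose big denominator
  have hpi : (0:ℝ) < Real.pi := Real.pi_pos
  let C : ℕ := (Finset.univ.sup fun i => ⌈|y i| / Real.pi⌉₊) + 1
  have hC : 0 < (C:ℝ) := by positivity
  have hlt : ∀ i, |y i| / C < Real.pi := by
    intro i
    have h1 : |y i| / Real.pi ≤ ((Finset.univ.sup fun i => ⌈|y i| / Real.pi⌉₊ : ℕ) : ℝ) := by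
      calc |y i| / Real.pi ≤ (⌈|y i| / Real.pi⌉₊ : ℝ) := Nat.le_ceil _
        _ ≤ _ := Nat.cast_le.mpr (Finset.le_sup (f := fun i => ⌈|y i| / Real.pi⌉₊) (Finset.mem_univ i))
    have h2 : |y i| / Real.pi < (C:ℝ) := by
      refine lt_of_le_of_lt h1 ?_
      exact_mod_cast Nat.lt_succ_self _
    rw [div_lt_iff₀ hpi] at h2
    rw [div_lt_iff₀ hC]
    calc |y i| < Real.pi * C := by linarith [h2]
      _ = Real.pi * C := rfl
  -- units
  let w : Fin n → ℚˣ := fun i =>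
    Units.mk0 (if 0 < y i then (1:ℚ)/C else -(1/C)) (by
      have : ((1:ℚ)/C) ≠ 0 := by
        have : (C:ℚ) ≠ 0 := by exact_mod_cast hC.ne'
        simp [this]
      split
      · exact this
      · simpa using this)
  refine ⟨fun i => (w i : ℚ) • y i, ?_, ?_⟩
  · have := hy.units_smul w
    convert this using 1
    funext i
    rfl
  · intro i
    have hwval : ((w i : ℚ) : ℝ) = if 0 < y i then (1:ℝ)/C else -(1/C) := by
      simp only [w, Units.val_mk0]
      split <;> push_cast <;> ring
    have key : (w i : ℚ) • y i = |y i| / C := by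
      rw [Rat.smul_def, hwval]
      rcases lt_trichotomy 0 (y i) with h | h | h
      · rw [if_pos h, abs_of_pos h]; ring
      · exact absurd h.symm (hyne i)
      · rw [if_neg (not_lt.mpr h.le), abs_of_neg h]; ring
    simp only [Set.mem_Ioo]
    rw [key]
    constructor
    · have : 0 < |y i| := abs_pos.mpr (hyne i)
      positivity
    · exact hlt i

section Walks
variable {V E : Type} (o t : E → V)

/-- Reachability within an edge set `D`. -/
def WalkTo (D : Set E) : V → V → Prop :=
  Relation.ReflTransGen (fun u v => ∃ e, e ∈ D ∧ o e = u ∧ t e = v)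

theorem walkTo_mono {D D' : Set E} (h : D ⊆ D') {u v : V} (hw : WalkTo o t D u v) :
    WalkTo o t D' u v := by
  refine Relation.ReflTransGen.mono ?_ _ _ hw
  rintro a b ⟨e, he, h1, h2⟩
  exact ⟨e, h he, h1, h2⟩

theorem walkTo_list {D : Set E} {u v : V} (hw : WalkTo o t D u v) :
    u = v ∨ ∃ (e : E) (l : List E),
      List.Chain' (fun e f => t e = o f) (e :: l) ∧ (∀ f ∈ e :: l, f ∈ D) ∧
      o e = u ∧ t ((e :: l).getLast (List.cons_ne_nil _ _)) = v := by
  induction hw with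
  | refl => exact Or.inl rfl
  | tail _ hstep ih =>
    obtain ⟨f, hfD, hfo, hft⟩ := hstep
    rcases ih with rfl | ⟨e, l, hch, hD, ho, ht⟩
    · exact Or.inr ⟨f, [], List.isChain_singleton _, by simpa using hfD, hfo, by simpa using hft⟩
    · refine Or.inr ⟨e, l ++ [f], ?_, ?_, ho, ?_⟩
      · rw [show e :: (l ++ [f]) = (e :: l) ++ [f] by simp]
        show List.IsChain _ _
        rw [List.isChain_append]
        refine ⟨hch, List.isChain_singleton _, ?_⟩
        intro x hx y hy
        simp only [List.head?_cons, Option.mem_def, Option.some.injEq] at hy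
        rw [List.getLast?_eq_getLast (List.cons_ne_nil _ _), Option.mem_def,
          Option.some.injEq] at hx
        subst hx; subst hy
        rw [ht, hfo]
      · intro g hg
        rw [show e :: (l ++ [f]) = (e :: l) ++ [f] by simp, List.mem_append] at hg
        rcases hg with hg | hg
        · exact hD g hg
        · simp only [List.mem_singleton] at hg; subst hg; exact hfD
      · have heq : (e :: (l ++ [f])).getLast (List.cons_ne_nil _ _) = f := by
          simp
        rw [heq]; exact hft

end Walks

theorem exists_spanning {V E : Type} [Fintype V] [Fintype E] [Nonempty V]
    (o t : E → V) (inv : E → E)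
    (hfp : ∀ e, inv e ≠ e) (hinv : ∀ e, inv (inv e) = e)
    (hoi : ∀ e, o (inv e) = t e) (hti : ∀ e, t (inv e) = o e)
    (hconn : MGConnected o t) :
    ∃ D : Finset E, (∀ e ∈ D, inv e ∈ D) ∧ D.card = 2 * (Fintype.card V - 1) ∧
      ∀ u v : V, WalkTo o t ↑D u v := by
  obtain ⟨v₀⟩ := (inferInstance : Nonempty V)
  have key : ∀ k : ℕ, k + 1 ≤ Fintype.card V →
      ∃ (S : Finset V) (D : Finset E), S.card = k + 1 ∧ v₀ ∈ S ∧
        (∀ e ∈ D, inv e ∈ D) ∧ D.card = 2 * k ∧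
        (∀ e ∈ D, o e ∈ S ∧ t e ∈ S) ∧ ∀ v ∈ S, WalkTo o t ↑D v₀ v := by
    intro k
    induction k with
    | zero =>
      intro _
      exact ⟨{v₀}, ∅, by simp, by simp, by simp, by simp, by simp,
        by intro v hv; simp only [Finset.mem_singleton] at hv; subst hv;
           exact Relation.ReflTransGen.refl⟩
    | succ k ih =>
      intro hk
      obtain ⟨S, D, hScard, hv₀S, hDinv, hDcard, hDend, hDwalk⟩ := ih (by omega)
      -- S is not everything
      have hSne : S ≠ Finset.univ := by
        intro h
        have := Finset.card_univ (α := V) ▸ h ▸ hScard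
        omega
      obtain ⟨v, hv⟩ : ∃ v, v ∉ S := by
        by_contra h
        push_neg at h
        exact hSne (Finset.eq_univ_iff_forall.mpr h)
      have hvne : v₀ ≠ v := fun h => hv (h ▸ hv₀S)
      obtain ⟨k', c, hch, hc0, hclast⟩ := hconn v₀ v hvne
      -- find first crossing edge
      have hex : ∃ m : ℕ, ∃ h : m < k' + 1, t (c ⟨m, h⟩) ∉ S := by
        refine ⟨k', Nat.lt_succ_self _, ?_⟩
        have : (⟨k', Nat.lt_succ_self _⟩ : Fin (k' + 1)) = Fin.last k' := rfl
        rw [this, hclast]; exact hv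
      classical
      set m := Nat.find hex with hmdef
      have hm := Nat.find_spec hex
      have hmin : ∀ m', m' < m → ¬ ∃ h : m' < k' + 1, t (c ⟨m', h⟩) ∉ S :=
        fun m' h => Nat.find_min hex h
      obtain ⟨hmlt, hmnotS⟩ := hm
      set e : E := c ⟨m, hmlt⟩ with hedef
      have hoeS : o e ∈ S := by
        rcases Nat.eq_zero_or_pos m with h0 | hpos
        · have : (⟨m, hmlt⟩ : Fin (k' + 1)) = 0 := by ext; simp [h0]
          rw [hedef, this, hc0]; exact hv₀S
        · obtain ⟨m', hm'⟩ := Nat.exists_eq_succ_of_ne_zero hpos.ne'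
          have hm'lt : m' < k' := by omega
          have hstep := hch ⟨m', hm'lt⟩
          have h1 : (⟨m', hm'lt⟩ : Fin k').castSucc = ⟨m', by omega⟩ := rfl
          have h2 : (⟨m', hm'lt⟩ : Fin k').succ = ⟨m' + 1, by omega⟩ := rfl
          rw [h1, h2] at hstep
          have h3 : (⟨m, hmlt⟩ : Fin (k' + 1)) = ⟨m' + 1, by omega⟩ := by
            ext; simp [hm']
          rw [hedef, h3, ← hstep]
          by_contra hcon
          exact (hmin m' (by omega)) ⟨by omega, hcon⟩
      have hteS : t e ∉ S := hmnotS
      -- extend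
      refine ⟨insert (t e) S, insert e (insert (inv e) D), ?_, Finset.mem_insert_of_mem hv₀S,
        ?_, ?_, ?_, ?_⟩
      · rw [Finset.card_insert_of_notMem hteS, hScard]
      · intro f hf
        simp only [Finset.mem_insert] at hf ⊢
        rcases hf with rfl | rfl | hf
        · exact Or.inr (Or.inl rfl)
        · exact Or.inl (hinv e)
        · exact Or.inr (Or.inr (hDinv f hf))
      · have heD : e ∉ D := fun h => hteS (hDend e h).2
        have hieD : inv e ∉ D := fun h => heD (by rw [← hinv e]; exact hDinv _ h)
        have hne : e ≠ inv e := fun h => hfp e h.symm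
        rw [Finset.card_insert_of_notMem, Finset.card_insert_of_notMem hieD, hDcard]
        · ring
        · simp only [Finset.mem_insert]
          push_neg
          exact ⟨hne, heD⟩
      · intro f hf
        simp only [Finset.mem_insert] at hf
        rcases hf with rfl | rfl | hf
        · exact ⟨Finset.mem_insert_of_mem hoeS, Finset.mem_insert_self _ _⟩
        · rw [hoi, hti]
          exact ⟨Finset.mem_insert_self _ _, Finset.mem_insert_of_mem hoeS⟩
        · exact ⟨Finset.mem_insert_of_mem (hDend f hf).1,
            Finset.mem_insert_of_mem (hDend f hf).2⟩
      · intro w hw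
        have hsub : (↑D : Set E) ⊆ ↑(insert e (insert (inv e) D)) := by
          intro x hx
          simp only [Finset.coe_insert, Set.mem_insert_iff] at *
          exact Or.inr (Or.inr hx)
        rcases Finset.mem_insert.mp hw with rfl | hwS
        · refine Relation.ReflTransGen.tail (walkTo_mono o t hsub (hDwalk _ hoeS)) ?_
          exact ⟨e, by simp, rfl, rfl⟩
        · exact walkTo_mono o t hsub (hDwalk w hwS)
  have h1 : Fintype.card V - 1 + 1 ≤ Fintype.card V := by
    have := Fintype.card_pos (α := V); omega
  obtain ⟨S, D, hScard, _, hDinv, hDcard, _, hDwalk⟩ := key (Fintype.card V - 1) h1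
  have hSuniv : S = Finset.univ := by
    apply Finset.eq_univ_of_card
    rw [hScard]
    have := Fintype.card_pos (α := V); omega
  have hall : ∀ v : V, WalkTo o t ↑D v₀ v := fun v => hDwalk v (hSuniv ▸ Finset.mem_univ v)
  have hsymm : Symmetric (fun u v : V => ∃ e, e ∈ (↑D : Set E) ∧ o e = u ∧ t e = v) := by
    rintro a b ⟨e, he, h1', h2⟩
    exact ⟨inv e, hDinv e he, by rw [hoi, h2], by rw [hti, h1']⟩
  refine ⟨D, hDinv, hDcard, ?_⟩
  intro u v
  exact Relation.ReflTransGen.trans (@Std.Symm.symm _ _ (@Relation.ReflTransGen.stdSymm _ _ ⟨hsymm⟩) _ _ (hall u)) (hall v)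

/-- Counting pairs `{e, inv e}`. -/
theorem pair_count {E : Type} [Fintype E] [LinearOrder E] (inv : E → E)
    (hfp : ∀ e, inv e ≠ e) (hinv : ∀ e, inv (inv e) = e)
    (S : Finset E) (hS : ∀ e ∈ S, inv e ∈ S) :
    S.card = 2 * (S.filter fun e => e < inv e).card := by
  classical
  set A := S.filter fun e => e < inv e with hA
  set B := S.filter fun e => inv e < e with hB
  have hunion : S = A ∪ B := by
    ext e
    simp only [hA, hB, Finset.mem_union, Finset.mem_filter]
    constructor
    · intro he
      rcases lt_or_gt_of_ne (Ne.symm (hfp e)) with h | h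
      · exact Or.inl ⟨he, h⟩
      · exact Or.inr ⟨he, h⟩
    · rintro (⟨he, _⟩ | ⟨he, _⟩) <;> exact he
  have hdisj : Disjoint A B := by
    rw [Finset.disjoint_left]
    intro e heA heB
    simp only [hA, hB, Finset.mem_filter] at heA heB
    exact absurd heB.2 (not_lt.mpr heA.2.le)
  have hcard : A.card = B.card := by
    refine Finset.card_bij (fun e _ => inv e) ?_ ?_ ?_
    · intro e he
      simp only [hA, hB, Finset.mem_filter] at he ⊢
      exact ⟨hS e he.1, by rw [hinv]; exact he.2⟩
    · intro e₁ h₁ e₂ h₂ h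
      have := congrArg inv h
      rwa [hinv, hinv] at this
    · intro e he
      simp only [hA, hB, Finset.mem_filter] at he ⊢
      exact ⟨inv e, ⟨hS e he.1, by rw [hinv]; exact he.2⟩, hinv e⟩
  rw [hunion, Finset.card_union_of_disjoint hdisj, hcard]
  ring

/-- Sum along a closed list-walk is a flux. -/
theorem flux_along {V E : Type} (o t : E → V) (e : E) (l : List E)
    (hch : List.Chain' (fun e f => t e = o f) (e :: l))
    (hclose : t ((e :: l).getLast (List.cons_ne_nil _ _)) = o e)
    (b b' : E → ℝ) (h : SameFlux o t b b') :
    ((e :: l).map b).sum = ((e :: l).map b').sum := by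
  set L := e :: l with hL
  have hlen : L.length = l.length + 1 := rfl
  set c : Fin (l.length + 1) → E := fun i => L.get i with hc
  have hofn : List.ofFn c = L := List.ofFn_get L
  have hcw : IsClosedWalk o t c := by
    constructor
    · intro i
      have := List.isChain_iff_getElem.mp hch i.1 (by simpa [hL] using i.2)
      exact this
    · have hlast : c (Fin.last l.length) = L.getLast (List.cons_ne_nil _ _) := by
        rw [List.getLast_eq_getElem]
        rfl
      have h0 : c 0 = e := rfl
      rw [hlast, h0]
      exact hclose
  have hb : ∑ i, b (c i) = (L.map b).sum := by
    rw [← hofn, List.map_ofFn, List.sum_ofFn]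
    rfl
  have hb' : ∑ i, b' (c i) = (L.map b').sum := by
    rw [← hofn, List.map_ofFn, List.sum_ofFn]
    rfl
  rw [← hb, ← hb', h _ c hcw]

/-- For every integer `n` with `0 ≤ n ≤ β` there exists a 1-form
`α : E → (−π, π]` such that the minimum of `(1/2)·#supp b` over all 1-forms
`b` with the same flux function as `α` equals `n`; equivalently, some minimal
form in `F(α)` has support of cardinality `2n` and every minimal form in
`F(α)` does. -/
theorem exists_magnetic_potential_with_invariant
    {V E : Type} [Fintype V] [Fintype E] [Nonempty V]
    (o t : E → V) (inv : E → E)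
    (hfp : ∀ e, inv e ≠ e) (hinv : ∀ e, inv (inv e) = e)
    (hoi : ∀ e, o (inv e) = t e) (hti : ∀ e, t (inv e) = o e)
    (hconn : MGConnected o t)
    (n : ℕ)
    (hn : (2 * n : ℤ) ≤ (Fintype.card E : ℤ) - 2 * Fintype.card V + 2) :
    ∃ α : E → ℝ, (∀ e, α (inv e) = - α e) ∧
      (∀ e, α e ∈ Set.Ioc (-Real.pi) Real.pi) ∧
      (∃ φ : E → ℝ, (∀ e, φ (inv e) = - φ e) ∧ SameFlux o t α φ ∧
        (∀ b : E → ℝ, (∀ e, b (inv e) = - b e) → SameFlux o t α b →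
          suppCard φ ≤ suppCard b) ∧ suppCard φ = 2 * n) ∧
      ∀ ψ : E → ℝ, (∀ e, ψ (inv e) = - ψ e) → SameFlux o t α ψ →
        (∀ b : E → ℝ, (∀ e, b (inv e) = - b e) → SameFlux o t α b →
          suppCard ψ ≤ suppCard b) → suppCard ψ = 2 * n := by

  classical
  letI : LinearOrder E := LinearOrder.lift' (Fintype.equivFin E) (Equiv.injective _)
  obtain ⟨D, hDinv, hDcard, hDwalk⟩ := exists_spanning o t inv hfp hinv hoi hti hconn
  set Dc : Finset E := Finset.univ \ D with hDc
  have hDcinv : ∀ e ∈ Dc, inv e ∈ Dc := by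
    intro e he
    simp only [hDc, Finset.mem_sdiff, Finset.mem_univ, true_and] at he ⊢
    intro h
    exact he (by rw [← hinv e]; exact hDinv _ h)
  have hDccard : Dc.card + D.card = Fintype.card E := by
    rw [hDc, Finset.card_sdiff_of_subset (Finset.subset_univ D)]
    have := Finset.card_le_univ D
    simp only [Finset.card_univ]
    omega
  set R : Finset E := Dc.filter (fun e => e < inv e) with hR
  have hRcard : Dc.card = 2 * R.card := pair_count inv hfp hinv Dc hDcinv
  have hV1 : 1 ≤ Fintype.card V := Fintype.card_pos
  have hnR : n ≤ R.card := by omega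
  obtain ⟨Tn, hTnsub, hTncard⟩ := Finset.exists_subset_card_eq hnR
  set ε : Fin n → E := fun i => ((Tn.orderIsoOfFin hTncard) i : E) with hε
  have hεinj : Function.Injective ε := fun i j h =>
    (Tn.orderIsoOfFin hTncard).injective (Subtype.ext h)
  have hεR : ∀ i, ε i ∈ R := fun i => hTnsub ((Tn.orderIsoOfFin hTncard) i).2
  have hεlt : ∀ i, ε i < inv (ε i) := fun i => (Finset.mem_filter.mp (hεR i)).2
  have hεD : ∀ i, ε i ∉ D := fun i =>
    (Finset.mem_sdiff.mp (Finset.mem_filter.mp (hεR i)).1).2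
  have hεinvD : ∀ i, inv (ε i) ∉ D := fun i h => hεD i (by rw [← hinv (ε i)]; exact hDinv _ h)
  have hεne : ∀ i j, ε i ≠ inv (ε j) := by
    intro i j h
    have h1 : inv (ε i) = ε j := by rw [h, hinv]
    have ha : ε j < ε i := by rw [h]; exact hεlt j
    have hb : ε i < ε j := by rw [← h1]; exact hεlt i
    exact absurd hb (not_lt.mpr ha.le)
  obtain ⟨x, hxind, hxmem⟩ := exists_indep_reals n
  have hinvinj : Function.Injective inv := fun a b h => by rw [← hinv a, h, hinv]
  set α : E → ℝ := fun e =>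
    (∑ i, if e = ε i then x i else 0) + (∑ i, if e = inv (ε i) then -(x i) else 0) with hαdef
  -- evaluation lemmas
  have hαε : ∀ i, α (ε i) = x i := by
    intro i
    simp only [hαdef]
    have h1 : (∑ j, if ε i = ε j then x j else 0) = x i := by
      rw [Finset.sum_eq_single i]
      · simp
      · intro j _ hji
        exact if_neg (fun h => hji (hεinj h).symm)
      · simp
    have h2 : (∑ j, if ε i = inv (ε j) then -(x j) else 0) = 0 :=
      Finset.sum_eq_zero (fun j _ => if_neg (hεne i j))
    rw [h1, h2, add_zero]
  have hαinvε : ∀ i, α (inv (ε i)) = -(x i) := by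
    intro i
    simp only [hαdef]
    have h1 : (∑ j, if inv (ε i) = ε j then x j else 0) = 0 :=
      Finset.sum_eq_zero (fun j _ => if_neg (fun h => hεne j i h.symm))
    have h2 : (∑ j, if inv (ε i) = inv (ε j) then -(x j) else 0) = -(x i) := by
      rw [Finset.sum_eq_single i]
      · simp
      · intro j _ hji
        exact if_neg (fun h => hji (hεinj (hinvinj h)).symm)
      · simp
    rw [h1, h2, zero_add]
  have hα0 : ∀ e, (∀ i, e ≠ ε i) → (∀ i, e ≠ inv (ε i)) → α e = 0 := by
    intro e h1 h2
    simp only [hαdef]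
    rw [Finset.sum_eq_zero (fun j _ => if_neg (h1 j)),
      Finset.sum_eq_zero (fun j _ => if_neg (h2 j)), add_zero]
  have hπ : (0:ℝ) < Real.pi := Real.pi_pos
  -- antisymmetry
  have hαsym : ∀ e, α (inv e) = - α e := by
    intro e
    simp only [hαdef]
    have e1 : (∑ i, if inv e = ε i then x i else 0)
        = ∑ i, if e = inv (ε i) then x i else 0 := by
      refine Finset.sum_congr rfl (fun i _ => ?_)
      congr 1
      refine propext ⟨fun h => by rw [← h, hinv], fun h => by rw [h, hinv]⟩
    have e2 : (∑ i, if inv e = inv (ε i) then -(x i) else 0)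
        = ∑ i, if e = ε i then -(x i) else 0 := by
      refine Finset.sum_congr rfl (fun i _ => ?_)
      congr 1
      refine propext ⟨fun h => hinvinj h, fun h => by rw [h]⟩
    have g1 : (∑ i, if e = inv (ε i) then x i else 0)
        = -∑ i, (if e = inv (ε i) then -(x i) else 0) := by
      rw [← Finset.sum_neg_distrib]
      exact Finset.sum_congr rfl (fun i _ => by split <;> simp)
    have g2 : (∑ i, if e = ε i then -(x i) else 0)
        = -∑ i, (if e = ε i then x i else 0) := by
      rw [← Finset.sum_neg_distrib]
      exact Finset.sum_congr rfl (fun i _ => by split <;> simp)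
    rw [e1, e2, g1, g2]
    ring
  -- range
  have hαrange : ∀ e, α e ∈ Set.Ioc (-Real.pi) Real.pi := by
    intro e
    by_cases h1 : ∃ i, e = ε i
    · obtain ⟨i, rfl⟩ := h1
      rw [hαε]
      exact ⟨by linarith [(hxmem i).1], (hxmem i).2.le⟩
    by_cases h2 : ∃ i, e = inv (ε i)
    · obtain ⟨i, rfl⟩ := h2
      rw [hαinvε]
      exact ⟨by linarith [(hxmem i).2], by linarith [(hxmem i).1]⟩
    push_neg at h1 h2
    rw [hα0 e h1 h2]
    exact ⟨by linarith, hπ.le⟩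
  -- support of α
  have hsupp : (Finset.univ.filter fun e => α e ≠ 0)
      = (Finset.univ.image ε) ∪ (Finset.univ.image fun i => inv (ε i)) := by
    ext e
    simp only [Finset.mem_filter, Finset.mem_union, Finset.mem_image, Finset.mem_univ, true_and]
    constructor
    · intro h
      by_contra hcon
      push_neg at hcon
      exact h (hα0 e (fun i heq => hcon.1 i heq.symm) (fun i heq => hcon.2 i heq.symm))
    · rintro (⟨i, rfl⟩ | ⟨i, rfl⟩)
      · rw [hαε]; exact ne_of_gt (hxmem i).1
      · rw [hαinvε]; exact neg_ne_zero.mpr (ne_of_gt (hxmem i).1)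
  have hsuppcard : suppCard α = 2 * n := by
    rw [suppCard, hsupp, Finset.card_union_of_disjoint, Finset.card_image_of_injective _ hεinj,
      Finset.card_image_of_injective _
        (show Function.Injective (fun i => inv (ε i)) from fun a b h => hεinj (hinvinj h))]
    · simp [Fintype.card_fin]; ring
    · rw [Finset.disjoint_left]
      rintro e he1 he2
      simp only [Finset.mem_image, Finset.mem_univ, true_and] at he1 he2
      obtain ⟨i, rfl⟩ := he1
      obtain ⟨j, hj⟩ := he2
      exact hεne i j hj.symm
  -- the fundamental cycles
  have hLs : ∀ i : Fin n, ∃ l : List E, (∀ f ∈ l, f ∈ D) ∧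
      List.Chain' (fun e f => t e = o f) (ε i :: l) ∧
      t ((ε i :: l).getLast (List.cons_ne_nil _ _)) = o (ε i) := by
    intro i
    rcases walkTo_list o t (hDwalk (t (ε i)) (o (ε i))) with heq | ⟨f, l, hch, hD, hof, htl⟩
    · exact ⟨[], by simp, List.isChain_singleton _, heq⟩
    · refine ⟨f :: l, hD, ?_, ?_⟩
      · exact List.isChain_cons_cons.mpr ⟨hof.symm, hch⟩
      · rw [List.getLast_cons (List.cons_ne_nil _ _)]
        exact htl
  choose L hLD hLch hLcl using hLs
  have hαflux : ∀ i, ((ε i :: L i).map α).sum = x i := by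
    intro i
    rw [List.map_cons, List.sum_cons, hαε]
    have : ((L i).map α).sum = 0 := by
      refine List.sum_eq_zero ?_
      intro y hy
      rw [List.mem_map] at hy
      obtain ⟨g, hg, rfl⟩ := hy
      have hgD := hLD i g hg
      exact hα0 g (fun j h => hεD j (h ▸ hgD)) (fun j h => hεinvD j (h ▸ hgD))
    rw [this, add_zero]
  -- lower bound
  have hlower : ∀ b : E → ℝ, (∀ e, b (inv e) = - b e) → SameFlux o t α b →
      2 * n ≤ suppCard b := by
    intro b hbsym hbflux
    set Sb : Finset E := Finset.univ.filter fun e => b e ≠ 0 with hSb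
    have hSbinv : ∀ e ∈ Sb, inv e ∈ Sb := by
      intro e he
      simp only [hSb, Finset.mem_filter, Finset.mem_univ, true_and] at he ⊢
      rw [hbsym]
      exact neg_ne_zero.mpr he
    set Rb : Finset E := Sb.filter fun e => e < inv e with hRb
    have h2Rb : Sb.card = 2 * Rb.card := pair_count inv hfp hinv Sb hSbinv
    set T : Finset ℝ := Rb.image b with hT
    have hmemspan : ∀ f : E, b f ∈ Submodule.span ℚ (↑T : Set ℝ) := by
      intro f
      by_cases hf : b f = 0
      · rw [hf]; exact zero_mem _
      · have hfSb : f ∈ Sb := by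
          simp only [hSb, Finset.mem_filter, Finset.mem_univ, true_and]; exact hf
        rcases lt_or_gt_of_ne (Ne.symm (hfp f)) with hlt | hgt
        · exact Submodule.subset_span
            (Finset.mem_coe.mpr (Finset.mem_image_of_mem b
              (Finset.mem_filter.mpr ⟨hfSb, hlt⟩)))
        · have hmem : inv f ∈ Rb := Finset.mem_filter.mpr
            ⟨hSbinv f hfSb, by rw [hinv]; exact hgt⟩
          have hbf : b f = -(b (inv f)) := by
            rw [← hbsym (inv f), hinv]
          rw [hbf]
          exact neg_mem (Submodule.subset_span
            (Finset.mem_coe.mpr (Finset.mem_image_of_mem b hmem)))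
    have hspanx : ∀ i, x i ∈ Submodule.span ℚ (↑T : Set ℝ) := by
      intro i
      have hfl : ((ε i :: L i).map b).sum = x i := by
        rw [← flux_along o t _ _ (hLch i) (hLcl i) α b hbflux]
        exact hαflux i
      rw [← hfl]
      refine list_sum_mem ?_
      intro y hy
      rw [List.mem_map] at hy
      obtain ⟨g, _, rfl⟩ := hy
      exact hmemspan g
    have hle : Submodule.span ℚ (Set.range x) ≤ Submodule.span ℚ (↑T : Set ℝ) :=
      Submodule.span_le.mpr (by rintro _ ⟨i, rfl⟩; exact hspanx i)
    haveI : Module.Finite ℚ (Submodule.span ℚ (↑T : Set ℝ)) :=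
      FiniteDimensional.span_of_finite ℚ (T.finite_toSet)
    have h3 : n ≤ Module.finrank ℚ (Submodule.span ℚ (↑T : Set ℝ)) := by
      have hh := finrank_span_eq_card hxind
      rw [Fintype.card_fin] at hh
      calc n = Module.finrank ℚ (Submodule.span ℚ (Set.range x)) := hh.symm
        _ ≤ _ := Submodule.finrank_mono hle
    have h4 : Module.finrank ℚ (Submodule.span ℚ (↑T : Set ℝ)) ≤ T.card :=
      finrank_span_finset_le_card T
    have h5 : T.card ≤ Rb.card := Finset.card_image_le
    have h6 : suppCard b = Sb.card := rfl
    omega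
  have hself : SameFlux o t α α := fun _ _ _ => rfl
  refine ⟨α, hαsym, hαrange,
    ⟨α, hαsym, hself, fun b hb1 hb2 => hsuppcard ▸ hlower b hb1 hb2, hsuppcard⟩, ?_⟩
  intro ψ hψ1 hψ2 hψmin
  have h1 : suppCard ψ ≤ suppCard α := hψmin α hαsym hself
  have h2 : 2 * n ≤ suppCard ψ := hlower ψ hψ1 hψ2
  omega
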